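/- Let R be a semihyperring with a multiplicative identity 1 and let I be a proper hyperideal of R. Then I is a semiprime hyperideal if and only if the complement R \ I is a p-system, i.e., for every a ∈ R \ I there exists r ∈ R such that a·r·a ∈ R \ I. -/

import Mathlib

/-- A semihyperring `(R, +, ·, 0)`: `+` is a hyperoperation (into nonempty sets),
`·` is an associative single-valued multiplication distributing over `+`,
and `0` is an additive identity and multiplicative absorbing element. -/
class Semihyperring (R : Type*) extends Mul R, Zero R where
  /-- hyperaddition -/
  hadd : R → R → Set R
  hadd_nonempty : ∀ a b : R, (hadd a b).Nonempty
  hadd_comm : ∀ a b : R, hadd a b = hadd b a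
  hadd_assoc : ∀ a b c : R, (⋃ x ∈ hadd a b, hadd x c) = ⋃ x ∈ hadd b c, hadd a x
  hadd_zero : ∀ a : R, hadd a 0 = {a}
  mul_assoc' : ∀ a b c : R, a * b * c = a * (b * c)
  left_distrib' : ∀ a b c : R, (fun x => a * x) '' hadd b c = hadd (a * b) (a * c)
  right_distrib' : ∀ a b c : R, (fun x => x * c) '' hadd a b = hadd (a * c) (b * c)
  mul_zero' : ∀ a : R, a * 0 = 0
  zero_mul' : ∀ a : R, 0 * a = 0

namespace Semihyperring

variable {R : Type*} [Semihyperring R]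

/-- Hyperaddition extended to sets: `A + B = ⋃_{a∈A, b∈B} (a + b)`. -/
def hAddSet (A B : Set R) : Set R := ⋃ a ∈ A, ⋃ b ∈ B, hadd a b

/-- The hypersum `x₁ + x₂ + ⋯ + xₙ` of a list of elements (as a set);
the empty hypersum is `{0}`, so `hSum [x] = {x}`. -/
def hSum : List R → Set R
  | [] => {0}
  | x :: xs => hAddSet {x} (hSum xs)

/-- A left hyperideal. -/
def IsLeftHyperideal (I : Set R) : Prop :=
  I.Nonempty ∧ (∀ a ∈ I, ∀ b ∈ I, hadd a b ⊆ I) ∧ ∀ a ∈ I, ∀ r : R, r * a ∈ I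

/-- A right hyperideal. -/
def IsRightHyperideal (I : Set R) : Prop :=
  I.Nonempty ∧ (∀ a ∈ I, ∀ b ∈ I, hadd a b ⊆ I) ∧ ∀ a ∈ I, ∀ r : R, a * r ∈ I

/-- A (two-sided) hyperideal. -/
def IsHyperideal (I : Set R) : Prop :=
  I.Nonempty ∧ (∀ a ∈ I, ∀ b ∈ I, hadd a b ⊆ I) ∧ ∀ a ∈ I, ∀ r : R, r * a ∈ I ∧ a * r ∈ I

/-- The product `HK`: union of all finite hypersums `a₁·b₁ + ⋯ + aₙ·bₙ` (n ≥ 1)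
with `aᵢ ∈ H`, `bᵢ ∈ K`. -/
def hProd (H K : Set R) : Set R :=
  ⋃ (l : List (R × R)) (_ : l ≠ []) (_ : ∀ p ∈ l, p.1 ∈ H ∧ p.2 ∈ K),
    hSum (l.map fun p => p.1 * p.2)

/-- The hyperideal generated by an element. -/
def genHyperideal (a : R) : Set R := ⋂₀ {I : Set R | IsHyperideal I ∧ a ∈ I}

/-- A prime hyperideal. -/
def IsPrimeHyperideal (P : Set R) : Prop :=
  IsHyperideal P ∧
    ∀ A B : Set R, IsHyperideal A → IsHyperideal B → hProd A B ⊆ P → A ⊆ P ∨ B ⊆ P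

/-- A semiprime hyperideal. -/
def IsSemiprimeHyperideal (I : Set R) : Prop :=
  IsHyperideal I ∧ ∀ H : Set R, IsHyperideal H → hProd H H ⊆ I → H ⊆ I

/-- A strongly irreducible hyperideal. -/
def IsStronglyIrreducibleHyperideal (I : Set R) : Prop :=
  IsHyperideal I ∧
    ∀ H K : Set R, IsHyperideal H → IsHyperideal K → H ∩ K ⊆ I → H ⊆ I ∨ K ⊆ I

/-- An irreducible hyperideal. -/
def IsIrreducibleHyperideal (I : Set R) : Prop :=
  IsHyperideal I ∧
    ∀ H K : Set R, IsHyperideal H → IsHyperideal K → I = H ∩ K → I = H ∨ I = K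

/-- `a·R`: the union of all finite hypersums `a·r₁ + ⋯ + a·rₙ` (n ≥ 1) with `rᵢ ∈ R`. -/
def rightMulSet (a : R) : Set R :=
  ⋃ (l : List R) (_ : l ≠ []), hSum (l.map fun r => a * r)

end Semihyperring

open Semihyperring


namespace SemihyperringAux

open Semihyperring

instance (priority := 100) semigroupOf {R : Type*} [Semihyperring R] : Semigroup R :=
  { (inferInstance : Mul R) with mul_assoc := Semihyperring.mul_assoc' }

variable {R : Type*} [Semihyperring R]

lemma mem_hAddSet {A B : Set R} {x : R} :
    x ∈ hAddSet A B ↔ ∃ a ∈ A, ∃ b ∈ B, x ∈ hadd a b := by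
  simp [hAddSet]

lemma zero_mem {I : Set R} (hI : IsHyperideal I) : (0 : R) ∈ I := by
  obtain ⟨⟨a, ha⟩, _, hmul⟩ := hI
  have := (hmul a ha 0).2
  rwa [mul_zero'] at this

lemma hAddSet_assoc (A B C : Set R) :
    hAddSet (hAddSet A B) C = hAddSet A (hAddSet B C) := by
  ext x
  simp only [mem_hAddSet]
  constructor
  · rintro ⟨t, ⟨a, ha, b, hb, htab⟩, c, hc, hx⟩
    have : x ∈ ⋃ s ∈ hadd a b, hadd s c := Set.mem_biUnion htab hx
    rw [hadd_assoc] at this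
    obtain ⟨s, hs, hx'⟩ := Set.mem_iUnion₂.mp this
    exact ⟨a, ha, s, ⟨b, hb, c, hc, hs⟩, hx'⟩
  · rintro ⟨a, ha, t, ⟨b, hb, c, hc, htbc⟩, hx⟩
    have : x ∈ ⋃ s ∈ hadd b c, hadd a s := Set.mem_biUnion htbc hx
    rw [← hadd_assoc] at this
    obtain ⟨s, hs, hx'⟩ := Set.mem_iUnion₂.mp this
    exact ⟨s, ⟨a, ha, b, hb, hs⟩, c, hc, hx'⟩

lemma hAddSet_zero_left (A : Set R) : hAddSet {(0 : R)} A = A := by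
  ext x
  simp only [mem_hAddSet, Set.mem_singleton_iff]
  constructor
  · rintro ⟨a, rfl, b, hb, hx⟩
    rw [hadd_comm, hadd_zero] at hx
    rwa [Set.mem_singleton_iff.mp hx]
  · intro hx
    exact ⟨0, rfl, x, hx, by rw [hadd_comm, hadd_zero]; rfl⟩

lemma hSum_append (m₁ m₂ : List R) :
    hSum (m₁ ++ m₂) = hAddSet (hSum m₁) (hSum m₂) := by
  induction m₁ with
  | nil => simp [hSum, hAddSet_zero_left]
  | cons y ys ih =>
    show hSum (y :: (ys ++ m₂)) = _
    rw [hSum, ih, ← hAddSet_assoc]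
    rfl

lemma hSum_singleton (x : R) : hSum [x] = {x} := by
  ext z
  simp only [hSum, mem_hAddSet, Set.mem_singleton_iff]
  constructor
  · rintro ⟨a, rfl, b, rfl, hz⟩
    rwa [hadd_zero, Set.mem_singleton_iff] at hz
  · intro h
    exact ⟨x, rfl, 0, rfl, by rw [hadd_zero]; exact h⟩

lemma mul_hSum {m : List R} {x : R} (hx : x ∈ hSum m) (r : R) :
    r * x ∈ hSum (m.map fun t => r * t) := by
  induction m generalizing x with
  | nil =>
    simp only [hSum, List.map_nil, Set.mem_singleton_iff] at hx ⊢
    rw [hx, mul_zero']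
  | cons y ys ih =>
    obtain ⟨a, ha, z, hz, hxz⟩ := mem_hAddSet.mp hx
    rw [Set.mem_singleton_iff] at ha; subst ha
    have himg : r * x ∈ (fun t => r * t) '' hadd a z := ⟨x, hxz, rfl⟩
    rw [left_distrib'] at himg
    exact mem_hAddSet.mpr ⟨r * a, rfl, r * z, ih hz, himg⟩

lemma hSum_mul {m : List R} {x : R} (hx : x ∈ hSum m) (r : R) :
    x * r ∈ hSum (m.map fun t => t * r) := by
  induction m generalizing x with
  | nil =>
    simp only [hSum, List.map_nil, Set.mem_singleton_iff] at hx ⊢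
    rw [hx, zero_mul']
  | cons y ys ih =>
    obtain ⟨a, ha, z, hz, hxz⟩ := mem_hAddSet.mp hx
    rw [Set.mem_singleton_iff] at ha; subst ha
    have himg : x * r ∈ (fun t => t * r) '' hadd a z := ⟨x, hxz, rfl⟩
    rw [right_distrib'] at himg
    exact mem_hAddSet.mpr ⟨a * r, rfl, z * r, ih hz, himg⟩

lemma hSum_subset {I : Set R} (hI : IsHyperideal I) {m : List R}
    (hm : ∀ t ∈ m, t ∈ I) : hSum m ⊆ I := by
  induction m with
  | nil =>
    intro x hx
    rw [hSum, Set.mem_singleton_iff] at hx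
    rw [hx]; exact zero_mem hI
  | cons y ys ih =>
    intro x hx
    obtain ⟨a, ha, z, hz, hxz⟩ := mem_hAddSet.mp hx
    rw [Set.mem_singleton_iff] at ha; subst ha
    exact hI.2.1 a (hm a (by simp)) z
      (ih (fun t ht => hm t (by simp [ht])) hz) hxz

/-- The "explicit" ideal generated by `a`: finite hypersums of `r·a·s`. -/
def Jset (a : R) : Set R :=
  ⋃ (l : List (R × R)) (_ : l ≠ []), hSum (l.map fun p => p.1 * a * p.2)

lemma mem_Jset {a x : R} :
    x ∈ Jset a ↔ ∃ l : List (R × R), l ≠ [] ∧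
      x ∈ hSum (l.map fun p => p.1 * a * p.2) := by
  simp [Jset]

lemma self_mem_Jset (one : R) (hone : ∀ x : R, one * x = x ∧ x * one = x)
    (a : R) : a ∈ Jset a := by
  refine mem_Jset.mpr ⟨[(one, one)], by simp, ?_⟩
  simp only [List.map_cons, List.map_nil, (hone a).2, (hone a).1]
  rw [hSum_singleton]
  rfl

lemma Jset_hyperideal (one : R) (hone : ∀ x : R, one * x = x ∧ x * one = x)
    (a : R) : IsHyperideal (Jset a) := by
  refine ⟨⟨a, self_mem_Jset one hone a⟩, ?_, ?_⟩
  · intro x hx y hy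
    obtain ⟨l₁, hl₁, hx⟩ := mem_Jset.mp hx
    obtain ⟨l₂, hl₂, hy⟩ := mem_Jset.mp hy
    intro z hz
    refine mem_Jset.mpr ⟨l₁ ++ l₂, by simp [hl₁], ?_⟩
    rw [List.map_append, hSum_append]
    exact mem_hAddSet.mpr ⟨x, hx, y, hy, hz⟩
  · intro x hx r
    obtain ⟨l, hl, hx⟩ := mem_Jset.mp hx
    constructor
    · refine mem_Jset.mpr ⟨l.map fun p => (r * p.1, p.2), by simp [hl], ?_⟩
      have h1 := mul_hSum hx r
      have he : ((fun t => r * t) ∘ fun p : R × R => p.1 * a * p.2)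
          = ((fun p : R × R => p.1 * a * p.2) ∘ fun p : R × R => (r * p.1, p.2)) := by
        funext p; simp [Function.comp, mul_assoc]
      rw [List.map_map, he, ← List.map_map] at h1
      exact h1
    · refine mem_Jset.mpr ⟨l.map fun p => (p.1, p.2 * r), by simp [hl], ?_⟩
      have h1 := hSum_mul hx r
      have he : ((fun t => t * r) ∘ fun p : R × R => p.1 * a * p.2)
          = ((fun p : R × R => p.1 * a * p.2) ∘ fun p : R × R => (p.1, p.2 * r)) := by
        funext p; simp [Function.comp, mul_assoc]
      rw [List.map_map, he, ← List.map_map] at h1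
      exact h1

lemma gen_mem (a : R) : a ∈ genHyperideal a :=
  fun _ hJ => hJ.2

lemma gen_hyperideal (one : R) (hone : ∀ x : R, one * x = x ∧ x * one = x)
    (a : R) : IsHyperideal (genHyperideal a) := by
  refine ⟨⟨a, gen_mem a⟩, ?_, ?_⟩
  · intro x hx y hy z hz J hJ
    exact hJ.1.2.1 x (hx J hJ) y (hy J hJ) hz
  · intro x hx r
    exact ⟨fun J hJ => (hJ.1.2.2 x (hx J hJ) r).1,
           fun J hJ => (hJ.1.2.2 x (hx J hJ) r).2⟩

lemma gen_subset_Jset (one : R) (hone : ∀ x : R, one * x = x ∧ x * one = x)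
    (a : R) : genHyperideal a ⊆ Jset a :=
  Set.sInter_subset_of_mem ⟨Jset_hyperideal one hone a, self_mem_Jset one hone a⟩

lemma Jset_mul_mem {a : R} {I : Set R} (hI : IsHyperideal I)
    (h : ∀ r : R, a * r * a ∈ I) {x y : R}
    (hx : x ∈ Jset a) (hy : y ∈ Jset a) : x * y ∈ I := by
  obtain ⟨l₁, _, hx⟩ := mem_Jset.mp hx
  obtain ⟨l₂, _, hy⟩ := mem_Jset.mp hy
  have hxy := hSum_mul hx y
  refine hSum_subset hI ?_ hxy
  intro t ht
  rw [List.map_map, List.mem_map] at ht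
  obtain ⟨p, hp, rfl⟩ := ht
  -- t = (p.1 * a * p.2) * y
  have hty := mul_hSum hy (p.1 * a * p.2)
  refine hSum_subset hI ?_ hty
  intro s hs
  rw [List.map_map, List.mem_map] at hs
  obtain ⟨q, hq, rfl⟩ := hs
  -- s = (p.1 * a * p.2) * (q.1 * a * q.2)
  show (fun t => p.1 * a * p.2 * t) ((fun p : R × R => p.1 * a * p.2) q) ∈ I
  have key : p.1 * a * p.2 * (q.1 * a * q.2)
      = p.1 * (a * (p.2 * q.1) * a) * q.2 := by
    simp only [mul_assoc]
  simp only [key]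
  have h1 : a * (p.2 * q.1) * a ∈ I := h _
  have h2 : p.1 * (a * (p.2 * q.1) * a) ∈ I := (hI.2.2 _ h1 p.1).1
  exact (hI.2.2 _ h2 q.2).2

end SemihyperringAux

open SemihyperringAux

/-- a proper hyperideal of a semihyperring with identity is semiprime iff
its complement is a p-system. -/
theorem semiprime_iff_compl_pSystem {R : Type*} [Semihyperring R]
    (one : R) (hone : ∀ x : R, one * x = x ∧ x * one = x)
    (I : Set R) (hI : IsHyperideal I) (hproper : I ≠ Set.univ) :
    IsSemiprimeHyperideal I ↔ ∀ a : R, a ∉ I → ∃ r : R, a * r * a ∉ I := by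
  constructor
  · -- semiprime → complement is p-system
    intro hsp a haI
    by_contra hcon
    push_neg at hcon
    have hsub : hProd (genHyperideal a) (genHyperideal a) ⊆ I := by
      intro x hx
      simp only [hProd, Set.mem_iUnion] at hx
      obtain ⟨l, _, hmem, hx⟩ := hx
      refine hSum_subset hI ?_ hx
      intro t ht
      rw [List.mem_map] at ht
      obtain ⟨p, hp, rfl⟩ := ht
      exact Jset_mul_mem hI hcon
        (gen_subset_Jset one hone a ((hmem p hp).1))
        (gen_subset_Jset one hone a ((hmem p hp).2))
    have := hsp.2 (genHyperideal a) (gen_hyperideal one hone a) hsub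
    exact haI (this (gen_mem a))
  · -- p-system → semiprime
    intro hps
    refine ⟨hI, fun H hH hsub x hxH => ?_⟩
    by_contra hxI
    obtain ⟨r, hr⟩ := hps x hxI
    apply hr
    apply hsub
    simp only [hProd, Set.mem_iUnion]
    refine ⟨[(x * r, x)], by simp, ?_, ?_⟩
    · intro p hp
      simp only [List.mem_cons, List.not_mem_nil, or_false] at hp
      subst hp
      exact ⟨(hH.2.2 x hxH r).2, hxH⟩
    · simp only [List.map_cons, List.map_nil, hSum_singleton]
      rfl
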